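/- arXiv:2310.14036 — 6 statements merged into one kernel-verified Lean document; each statement's English description precedes it below -/
import Mathlib

section
/- Let A be a real symmetric D×D matrix with eigenvalues λ_1,…,λ_D and orthonormal eigenvectors u_1,…,u_D, let h > 0 satisfy 1 - hλ_i ≠ 0 for all i, and let θ₀ ∈ ℝ^D. Then for every natural number n, ∑_{i=1}^D exp(n · log(1 - hλ_i)) ⟨θ₀, u_i⟩ u_i = (I - hA)^n θ₀ (an identity of vectors in ℂ^D whose right-hand side is real). That is, the principal flow's closed-form solution θ(t) = ∑_i e^{(t/h)·log(1-hλ_i)} ⟨θ₀,u_i⟩ u_i evaluated at t = nh reproduces the gradient descent iterates for the quadratic loss E(θ) = ½θᵀAθ exactly. -/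
open Matrix

/-- For a real symmetric matrix `A` with eigenvalues `λ_i` and orthonormal
eigenvectors `u_i`, `h > 0` with `1 - hλ_i ≠ 0`, and any `θ₀ ∈ ℝ^D` and `n : ℕ`,
`∑_i exp(n·log(1 - hλ_i)) ⟨θ₀,u_i⟩ u_i = (I - hA)^n θ₀` as vectors in `ℂ^D`: the
principal flow's closed-form solution at time `t = nh` reproduces the gradient descent
iterates for the quadratic loss `E(θ) = ½θᵀAθ`. -/
theorem principal_flow_exact_on_quadratics (D : ℕ) (A : Matrix (Fin D) (Fin D) ℝ)
    (hA : A.IsSymm) (lam : Fin D → ℝ) (u : Fin D → (Fin D → ℝ))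
    (heig : ∀ i, A.mulVec (u i) = lam i • u i)
    (horth : ∀ i j, u i ⬝ᵥ u j = if i = j then (1 : ℝ) else 0)
    (h : ℝ) (hh : 0 < h) (hne : ∀ i, 1 - h * lam i ≠ 0)
    (θ₀ : Fin D → ℝ) (n : ℕ) :
    (∑ i, fun k => Complex.exp (n * Complex.log (1 - (h : ℂ) * (lam i : ℂ))) *
        ((θ₀ ⬝ᵥ u i : ℝ) : ℂ) * ((u i k : ℝ) : ℂ))
      = fun k => ((((1 - h • A) ^ n).mulVec θ₀ k : ℝ) : ℂ) := by
  set B : Matrix (Fin D) (Fin D) ℝ := 1 - h • A with hB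
  have hBu : ∀ i, B.mulVec (u i) = (1 - h * lam i) • u i := by
    intro i
    have h1 : B.mulVec (u i) = (1 : Matrix (Fin D) (Fin D) ℝ).mulVec (u i)
        - (h • A).mulVec (u i) := by
      rw [hB, Matrix.sub_mulVec]
    rw [h1, Matrix.one_mulVec, Matrix.smul_mulVec, heig i]
    funext k
    simp [smul_smul, sub_mul]
  have hBnu : ∀ i, (B ^ n).mulVec (u i) = ((1 - h * lam i) ^ n) • u i := by
    intro i
    induction n with
    | zero => simp
    | succ m ih =>
      rw [pow_succ, ← Matrix.mulVec_mulVec, hBu i, Matrix.mulVec_smul, ih,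
        smul_smul, pow_succ]
      ring_nf
  set U : Matrix (Fin D) (Fin D) ℝ := Matrix.of u with hU
  have hUUt : U * Uᵀ = 1 := by
    ext i j
    simpa [Matrix.mul_apply, Matrix.one_apply, dotProduct, hU] using horth i j
  have hUtU : Uᵀ * U = 1 := mul_eq_one_comm.mp hUUt
  have hcomplete : ∀ k l, (∑ i, u i k * u i l) = if k = l then (1 : ℝ) else 0 := by
    intro k l
    have := congrFun (congrFun hUtU k) l
    simpa [Matrix.mul_apply, Matrix.transpose_apply, Matrix.one_apply, hU] using this
  have hdecomp : ∀ k, θ₀ k = ∑ i, (θ₀ ⬝ᵥ u i) * u i k := by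
    intro k
    calc θ₀ k = ∑ l, θ₀ l * ∑ i, u i l * u i k := by
          simp [hcomplete]
      _ = ∑ l, ∑ i, θ₀ l * (u i l * u i k) := by
          simp [Finset.mul_sum]
      _ = ∑ i, ∑ l, θ₀ l * (u i l * u i k) := Finset.sum_comm
      _ = ∑ i, (θ₀ ⬝ᵥ u i) * u i k := by
          refine Finset.sum_congr rfl fun i _ => ?_
          simp [dotProduct, Finset.sum_mul, mul_assoc]
  have hreal : ∀ k, (∑ i, (1 - h * lam i) ^ n * (θ₀ ⬝ᵥ u i) * u i k)
      = (B ^ n).mulVec θ₀ k := by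
    intro k
    symm
    calc (B ^ n).mulVec θ₀ k = ∑ l, (B ^ n) k l * θ₀ l := by
          simp [Matrix.mulVec, dotProduct]
      _ = ∑ l, (B ^ n) k l * ∑ i, (θ₀ ⬝ᵥ u i) * u i l := by
          refine Finset.sum_congr rfl fun l _ => ?_
          rw [← hdecomp l]
      _ = ∑ l, ∑ i, (θ₀ ⬝ᵥ u i) * ((B ^ n) k l * u i l) := by
          refine Finset.sum_congr rfl fun l _ => ?_
          rw [Finset.mul_sum]
          refine Finset.sum_congr rfl fun i _ => ?_
          ring
      _ = ∑ i, ∑ l, (θ₀ ⬝ᵥ u i) * ((B ^ n) k l * u i l) := Finset.sum_comm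
      _ = ∑ i, (θ₀ ⬝ᵥ u i) * ((B ^ n).mulVec (u i) k) := by
          refine Finset.sum_congr rfl fun i _ => ?_
          rw [← Finset.mul_sum]
          rfl
      _ = ∑ i, (1 - h * lam i) ^ n * (θ₀ ⬝ᵥ u i) * u i k := by
          refine Finset.sum_congr rfl fun i _ => ?_
          rw [hBnu i]
          simp [Pi.smul_apply]
          ring
  funext k
  simp only [Finset.sum_apply]
  have hexp : ∀ i, Complex.exp (n * Complex.log (1 - (h : ℂ) * (lam i : ℂ)))
      = ((1 - h * lam i : ℝ) : ℂ) ^ n := by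
    intro i
    have hz : (1 - (h : ℂ) * (lam i : ℂ)) = ((1 - h * lam i : ℝ) : ℂ) := by
      push_cast; ring
    rw [hz, Complex.exp_nat_mul, Complex.exp_log (by exact_mod_cast hne i)]
  rw [← hreal k]
  push_cast
  simp only [hexp]
  push_cast
  ring
end

section
/- Let A be a real symmetric D×D matrix with eigenvalues λ_1,…,λ_D and orthonormal eigenvectors u_1,…,u_D, let h > 0 satisfy 1 - hλ_i ≠ 0 for all i, and let θ₀ ∈ ℝ^D. Define θ : ℝ → ℂ^D by θ(t) = ∑_{i=1}^D exp((t/h)·log(1 - hλ_i)) ⟨θ₀, u_i⟩ u_i. Then θ is differentiable and satisfies the principal flow equation for the quadratic loss E(θ) = ½θᵀAθ: θ'(t) = ∑_{i=1}^D (log(1 - hλ_i)/h) ⟨θ(t), u_i⟩ u_i, which equals ∑_i (log(1-hλ_i)/(hλ_i)) λ_i ⟨θ(t), u_i⟩ u_i, the PF vector field evaluated at θ(t). -/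
open Matrix

/-- With `A` real symmetric, eigen-data `(λ_i, u_i)`, `h > 0`, `1 - hλ_i ≠ 0`,
and `θ(t) = ∑_i exp((t/h)·log(1 - hλ_i)) ⟨θ₀,u_i⟩ u_i`, the curve `θ` is differentiable
and satisfies the principal flow equation for the quadratic loss `E(θ) = ½θᵀAθ`:
`θ'(t) = ∑_i (log(1 - hλ_i)/h) ⟨θ(t),u_i⟩ u_i`, which equals
`∑_i (log(1-hλ_i)/(hλ_i)) λ_i ⟨θ(t),u_i⟩ u_i`, the PF vector field at `θ(t)`. -/
theorem principal_flow_solution_quadratic (D : ℕ) (A : Matrix (Fin D) (Fin D) ℝ)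
    (hA : A.IsSymm) (lam : Fin D → ℝ) (u : Fin D → (Fin D → ℝ))
    (heig : ∀ i, A.mulVec (u i) = lam i • u i)
    (horth : ∀ i j, u i ⬝ᵥ u j = if i = j then (1 : ℝ) else 0)
    (h : ℝ) (hh : 0 < h) (hne : ∀ i, 1 - h * lam i ≠ 0)
    (θ₀ : Fin D → ℝ) (θ : ℝ → (Fin D → ℂ))
    (hθ : θ = fun t : ℝ => ∑ i, fun k =>
      Complex.exp (((t : ℂ) / (h : ℂ)) * Complex.log (1 - (h : ℂ) * (lam i : ℂ))) *
        ((θ₀ ⬝ᵥ u i : ℝ) : ℂ) * ((u i k : ℝ) : ℂ))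
    (t : ℝ) :
    HasDerivAt θ
      (∑ i, fun k => (Complex.log (1 - (h : ℂ) * (lam i : ℂ)) / (h : ℂ)) *
        (∑ m, θ t m * ((u i m : ℝ) : ℂ)) * ((u i k : ℝ) : ℂ)) t ∧
    (∑ i, fun k => (Complex.log (1 - (h : ℂ) * (lam i : ℂ)) / (h : ℂ)) *
        (∑ m, θ t m * ((u i m : ℝ) : ℂ)) * ((u i k : ℝ) : ℂ))
      = ∑ i, fun k => (Complex.log (1 - (h : ℂ) * (lam i : ℂ)) / ((h : ℂ) * (lam i : ℂ))) *
          ((lam i : ℂ) * (∑ m, θ t m * ((u i m : ℝ) : ℂ))) * ((u i k : ℝ) : ℂ) := by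
  set L : Fin D → ℂ := fun i => Complex.log (1 - (h : ℂ) * (lam i : ℂ)) with hL
  set c : Fin D → ℂ := fun i => ((θ₀ ⬝ᵥ u i : ℝ) : ℂ) with hc
  -- inner product identity
  have key : ∀ (s : ℝ) i, (∑ m, θ s m * ((u i m : ℝ) : ℂ))
      = Complex.exp (((s : ℂ) / (h : ℂ)) * L i) * c i := by
    intro s i
    have hθs : ∀ m, θ s m = ∑ j, Complex.exp (((s : ℂ) / (h : ℂ)) * L j) * c j * ((u j m : ℝ) : ℂ) := by
      intro m; rw [hθ]; simp; rfl
    calc (∑ m, θ s m * ((u i m : ℝ) : ℂ))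
        = ∑ m, ∑ j, Complex.exp (((s : ℂ) / (h : ℂ)) * L j) * c j * ((u j m : ℝ) : ℂ) * ((u i m : ℝ) : ℂ) := by
          simp_rw [hθs, Finset.sum_mul]
      _ = ∑ j, Complex.exp (((s : ℂ) / (h : ℂ)) * L j) * c j * ∑ m, ((u j m : ℝ) : ℂ) * ((u i m : ℝ) : ℂ) := by
          rw [Finset.sum_comm]; simp_rw [mul_assoc, Finset.mul_sum]
      _ = Complex.exp (((s : ℂ) / (h : ℂ)) * L i) * c i := by
          have : ∀ j, (∑ m, ((u j m : ℝ) : ℂ) * ((u i m : ℝ) : ℂ)) = if j = i then (1 : ℂ) else 0 := by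
            intro j
            have := horth j i
            have h2 : ((u j ⬝ᵥ u i : ℝ) : ℂ) = ((if j = i then (1:ℝ) else 0 : ℝ) : ℂ) := by rw [this]
            simpa [dotProduct, apply_ite] using h2
          simp_rw [this, mul_ite, mul_one, mul_zero]
          simp
  constructor
  · -- derivative
    have hderiv : HasDerivAt θ
        (∑ i, (L i / (h : ℂ) * (Complex.exp (((t : ℂ) / (h : ℂ)) * L i) * c i)) • fun k => ((u i k : ℝ) : ℂ)) t := by
      rw [hθ]
      apply HasDerivAt.fun_sum
      intro i _
      have hg : HasDerivAt (fun s : ℝ => ((s : ℂ) / (h : ℂ)) * L i) (1 / (h : ℂ) * L i) t := by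
        have h1 : HasDerivAt (fun s : ℝ => (s : ℂ)) 1 t := Complex.ofRealCLM.hasDerivAt
        simpa using ((h1.div_const (h : ℂ)).mul_const (L i))
      have hexp := hg.cexp
      have := (hexp.mul_const (c i)).smul_const (fun k => ((u i k : ℝ) : ℂ))
      convert this using 1
      · funext s m
        simp only [Pi.smul_apply, smul_eq_mul]
        rfl
      funext k
      simp only [Pi.smul_apply, smul_eq_mul]
      ring
    convert hderiv using 2 with i
    funext k
    rw [key t i]
    simp only [Pi.smul_apply, smul_eq_mul]
    rfl
  · -- algebraic identity
    apply Finset.sum_congr rfl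
    intro i _
    funext k
    by_cases hli : lam i = 0
    · simp [hL, hli]
    · have : (lam i : ℂ) ≠ 0 := by exact_mod_cast hli
      have hh0 : (h : ℂ) ≠ 0 := by exact_mod_cast hh.ne'
      field_simp
end

section
/- Let h > 0 and λ > 0 with hλ ≠ 1. Then the real part of the principal-flow coefficient α_PF(hλ) = log(1 - hλ)/(hλ) satisfies: Re(α_PF(hλ)) < 0 if and only if hλ < 2; Re(α_PF(hλ)) > 0 if and only if hλ > 2; and Re(α_PF(hλ)) = 0 if and only if hλ = 2. Moreover, for 1 < hλ, log(1 - hλ) = log(hλ - 1) + iπ, so for 1 < hλ < 2 the coefficient is complex with negative real part Re(α_PF) = log(hλ-1)/(hλ) < 0, and for hλ > 2 it is complex with positive real part. -/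
/-- For `h > 0`, `λ > 0`, `hλ ≠ 1`, the real part of the principal-flow
coefficient `α_PF(hλ) = log(1 - hλ)/(hλ)` is negative iff `hλ < 2`, positive iff
`hλ > 2`, zero iff `hλ = 2`; moreover for `hλ > 1`, `log(1 - hλ) = log(hλ - 1) + iπ`,
so for `1 < hλ < 2` the coefficient has negative real part `log(hλ-1)/(hλ)` and for
`hλ > 2` positive real part. -/
theorem principal_flow_coefficient_real_part_sign (h lam : ℝ) (hh : 0 < h)
    (hl : 0 < lam) (hne : h * lam ≠ 1) :
    ((Complex.log (1 - (h * lam : ℝ)) / ((h * lam : ℝ) : ℂ)).re < 0 ↔ h * lam < 2) ∧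
    (0 < (Complex.log (1 - (h * lam : ℝ)) / ((h * lam : ℝ) : ℂ)).re ↔ 2 < h * lam) ∧
    ((Complex.log (1 - (h * lam : ℝ)) / ((h * lam : ℝ) : ℂ)).re = 0 ↔ h * lam = 2) ∧
    (1 < h * lam →
      Complex.log (1 - (h * lam : ℝ)) = (Real.log (h * lam - 1) : ℂ) + Real.pi * Complex.I) ∧
    (1 < h * lam → h * lam < 2 →
      (Complex.log (1 - (h * lam : ℝ)) / ((h * lam : ℝ) : ℂ)).re
          = Real.log (h * lam - 1) / (h * lam) ∧
      (Complex.log (1 - (h * lam : ℝ)) / ((h * lam : ℝ) : ℂ)).re < 0) ∧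
    (2 < h * lam → 0 < (Complex.log (1 - (h * lam : ℝ)) / ((h * lam : ℝ) : ℂ)).re) := by
  set x := h * lam with hx
  have hx0 : 0 < x := mul_pos hh hl
  have hcast : (1 - (x : ℂ)) = ((1 - x : ℝ) : ℂ) := by push_cast; ring
  rw [show ((1 : ℂ) - (x : ℝ)) = ((1 - x : ℝ) : ℂ) from hcast]
  have habs : |1 - x| ≠ 0 := by
    simp only [abs_ne_zero, sub_ne_zero]
    exact fun e => hne (by linarith [e])
  have habs0 : 0 < |1 - x| := lt_of_le_of_ne (abs_nonneg _) (Ne.symm habs)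
  -- the real part of the expression
  have hre : (Complex.log ((1 - x : ℝ) : ℂ) / ((x : ℝ) : ℂ)).re = Real.log |1 - x| / x := by
    rw [Complex.div_ofReal_re, Complex.log_ofReal_re, Real.log_abs]
  have h1 : Real.log |1 - x| / x < 0 ↔ x < 2 := by
    rw [div_lt_iff₀ hx0, zero_mul, Real.log_neg_iff habs0, abs_lt]
    constructor
    · rintro ⟨_, h2⟩; linarith
    · intro h2; constructor <;> linarith
  have h2 : 0 < Real.log |1 - x| / x ↔ 2 < x := by
    rw [lt_div_iff₀ hx0, zero_mul, Real.log_pos_iff habs0.le, lt_abs]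
    constructor
    · rintro (h2 | h2) <;> [linarith; linarith]
    · intro h2; right; linarith
  have h3 : Real.log |1 - x| / x = 0 ↔ x = 2 := by
    rw [div_eq_zero_iff]
    constructor
    · rintro (hlog | hzero)
      · rcases Real.log_eq_zero.mp hlog with h' | h' | h'
        · exact absurd h' habs
        · rcases abs_eq (le_of_lt one_pos) |>.mp h' with h'' | h'' <;> [exfalso; skip]
          · linarith
          · linarith
        · linarith [abs_nonneg (1 - x)]
      · linarith
    · intro h'; left
      rw [h']
      norm_num
  have h4 : 1 < x →
      Complex.log ((1 - x : ℝ) : ℂ) = (Real.log (x - 1) : ℂ) + Real.pi * Complex.I := by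
    intro hgt
    have hneg : (1 - x : ℝ) < 0 := by linarith
    apply Complex.ext
    · simp only [Complex.log_ofReal_re, Complex.add_re, Complex.ofReal_re,
        Complex.mul_re, Complex.ofReal_im, Complex.I_re, Complex.I_im]
      rw [show (1 - x : ℝ) = -(x - 1) by ring, Real.log_neg_eq_log]
      ring
    · simp only [Complex.log_im, Complex.add_im, Complex.ofReal_im,
        Complex.mul_im, Complex.ofReal_re, Complex.I_im, Complex.I_re]
      rw [Complex.arg_ofReal_of_neg hneg]
      ring
  refine ⟨by rw [hre]; exact h1, by rw [hre]; exact h2, by rw [hre]; exact h3, h4, ?_, ?_⟩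
  · intro hgt hlt
    have heq : (Complex.log ((1 - x : ℝ) : ℂ) / ((x : ℝ) : ℂ)).re
        = Real.log (x - 1) / x := by
      rw [hre, abs_of_neg (by linarith : (1 - x : ℝ) < 0)]
      norm_num
    exact ⟨heq, by rw [hre]; exact h1.mpr hlt⟩
  · intro hgt
    rw [hre]; exact h2.mpr hgt
end

section
/- Let h > 0, λ > 0 with hλ ≠ 1, let μ = log(1 - hλ)/h ∈ ℂ, let z₀ ∈ ℂ with z₀ ≠ 0, and define z(t) = exp(tμ)·z₀. If 0 < hλ < 2 then z(t) → 0 as t → ∞, while if hλ > 2 then |z(t)| → ∞ as t → ∞. That is, the solution of the one-dimensional principal flow for E(z) = ½z² converges to the minimum exactly when hλ < 2 and diverges when hλ > 2. -/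
open Filter

/-- For `h > 0`, `λ > 0` with `hλ ≠ 1`, `μ = log(1 - hλ)/h ∈ ℂ` and
`z₀ ≠ 0`, the solution `z(t) = exp(tμ)·z₀` of the one-dimensional principal flow for
`E(z) = ½λz²` converges to `0` as `t → ∞` if `0 < hλ < 2` and its modulus diverges
to `∞` if `hλ > 2`. -/
theorem principal_flow_1d_convergence_divergence (h lam : ℝ) (hh : 0 < h) (hl : 0 < lam)
    (hne : h * lam ≠ 1) (μ : ℂ) (hμ : μ = Complex.log (1 - (h * lam : ℝ)) / (h : ℂ))
    (z₀ : ℂ) (hz₀ : z₀ ≠ 0) :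
    (h * lam < 2 →
      Tendsto (fun t : ℝ => Complex.exp ((t : ℂ) * μ) * z₀) atTop (nhds 0)) ∧
    (2 < h * lam →
      Tendsto (fun t : ℝ => ‖Complex.exp ((t : ℂ) * μ) * z₀‖) atTop atTop) := by
  have hre : μ.re = Real.log |1 - h * lam| / h := by
    rw [hμ, Complex.div_ofReal_re, Complex.log_re]
    congr 2
    rw [show (1 - ((h * lam : ℝ) : ℂ)) = (((1 - h * lam : ℝ)) : ℂ) by push_cast; ring,
      Complex.norm_real, Real.norm_eq_abs]
  have habs : ∀ t : ℝ, ‖Complex.exp ((t : ℂ) * μ) * z₀‖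
      = Real.exp (t * μ.re) * ‖z₀‖ := by
    intro t
    rw [norm_mul, Complex.norm_exp]
    congr 2
    simp [Complex.mul_re]
  constructor
  · intro h2
    have hμneg : μ.re < 0 := by
      rw [hre]
      apply div_neg_of_neg_of_pos _ hh
      apply Real.log_neg_iff (abs_pos.mpr (sub_ne_zero_of_ne (Ne.symm hne))) |>.mpr
      · rw [abs_lt]
        constructor <;> nlinarith [mul_pos hh hl]
    rw [tendsto_zero_iff_norm_tendsto_zero]
    have : Tendsto (fun t : ℝ => Real.exp (t * μ.re) * ‖z₀‖) atTop (nhds 0) := by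
      have h1 : Tendsto (fun t : ℝ => t * μ.re) atTop atBot :=
        tendsto_id.atTop_mul_const_of_neg hμneg
      simpa using (Real.tendsto_exp_atBot.comp h1).mul_const ‖z₀‖
    refine this.congr fun t => ?_
    rw [← habs t]
  · intro h2
    have hμpos : 0 < μ.re := by
      rw [hre]
      apply div_pos _ hh
      apply Real.log_pos
      rw [lt_abs]; right; nlinarith
    have h1 : Tendsto (fun t : ℝ => t * μ.re) atTop atTop :=
      tendsto_id.atTop_mul_const hμpos
    have h3 : Tendsto (fun t : ℝ => Real.exp (t * μ.re) * ‖z₀‖) atTop atTop :=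
      (Real.tendsto_exp_atTop.comp h1).atTop_mul_const (by simpa using hz₀)
    exact h3.congr fun t => (habs t).symm
end

section
/- Let A be a real symmetric D×D matrix and n a natural number. For h ∈ ℝ define the matrix M(h) = -∑_{p=0}^{n} (h^p/(p+1)) A^{p+1}, so that θ̇ = M(h)θ is the order-n truncated backward-error-analysis (principal) flow for the quadratic loss E(θ) = ½θᵀAθ. Then, as h → 0, exp(h·M(h)) - (I - hA) = O(h^{n+2}) in matrix norm; equivalently, the time-h solution of the truncated flow matches one gradient descent step θ ↦ (I - hA)θ with error of order h^{n+2} for every initial point. -/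
open Matrix

attribute [local instance] Matrix.linftyOpNormedRing Matrix.linftyOpNormedAlgebra

lemma scalar_bea (lam : ℝ) (n : ℕ) :
    (fun h : ℝ => Real.exp (-∑ p ∈ Finset.range (n + 1), (h * lam) ^ (p + 1) / (p + 1)) -
        (1 - h * lam)) =O[nhds 0] (fun h : ℝ => h ^ (n + 2)) := by
  rw [Asymptotics.isBigO_iff]
  refine ⟨6 * (|lam| + 1) ^ (n + 2), ?_⟩
  have hδ : (0:ℝ) < 1 / (2 * (|lam| + 1)) := by positivity
  have hev : ∀ᶠ h : ℝ in nhds 0, |h| < 1 / (2 * (|lam| + 1)) := by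
    filter_upwards [Metric.ball_mem_nhds (0:ℝ) hδ] with h hh
    simpa [Real.dist_eq] using hh
  filter_upwards [hev] with h hh
  set x := h * lam with hxdef
  have hlam : (0:ℝ) ≤ |lam| := abs_nonneg _
  have hx : |x| ≤ 1 / 2 := by
    have : |x| = |h| * |lam| := abs_mul _ _
    rw [this]
    have h1 : |h| * |lam| ≤ |h| * (|lam| + 1) := by nlinarith [abs_nonneg h]
    have h2 : |h| * (|lam| + 1) < (1 / (2 * (|lam| + 1))) * (|lam| + 1) := by
      apply mul_lt_mul_of_pos_right hh; linarith
    have h3 : (1 / (2 * (|lam| + 1))) * (|lam| + 1) = 1 / 2 := by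
      field_simp
    linarith
  have hx1 : |x| < 1 := lt_of_le_of_lt hx (by norm_num)
  have hlog := Real.abs_log_sub_add_sum_range_le hx1 (n + 1)
  set d := (∑ i ∈ Finset.range (n + 1), x ^ (i + 1) / (i + 1)) + Real.log (1 - x) with hddef
  have hxpow : |x| ^ (n + 2) ≤ (1/2 : ℝ) ^ (n + 2) := pow_le_pow_left₀ (abs_nonneg _) hx _
  have hhalf : ((1:ℝ)/2) ^ (n + 2) ≤ 1/4 := by
    calc ((1:ℝ)/2) ^ (n + 2) ≤ (1/2 : ℝ) ^ 2 := by
          apply pow_le_pow_of_le_one (by norm_num) (by norm_num) (by omega)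
      _ = 1/4 := by norm_num
  have hd2 : |d| ≤ 2 * |x| ^ (n + 2) := by
    have h1x : (1:ℝ) - |x| ≥ 1/2 := by linarith
    have : |x| ^ (n + 1 + 1) / (1 - |x|) ≤ |x| ^ (n + 2) / (1/2) := by
      apply div_le_div_of_nonneg_left (by positivity) (by norm_num) h1x
    rw [hddef]
    calc |(∑ i ∈ Finset.range (n + 1), x ^ (i + 1) / (i + 1)) + Real.log (1 - x)|
        ≤ |x| ^ (n + 1 + 1) / (1 - |x|) := hlog
      _ ≤ |x| ^ (n + 2) / (1/2) := this
      _ = 2 * |x| ^ (n + 2) := by ring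
  have hd1 : |d| ≤ 1 := by
    calc |d| ≤ 2 * |x| ^ (n+2) := hd2
      _ ≤ 2 * (1/4) := by nlinarith
      _ ≤ 1 := by norm_num
  have hxlt : x < 1 := lt_of_le_of_lt (le_abs_self x) hx1
  have h1xpos : (0:ℝ) < 1 - x := by linarith
  have hkey : -∑ p ∈ Finset.range (n + 1), x ^ (p + 1) / (p + 1) = Real.log (1 - x) + (-d) := by
    rw [hddef]; ring
  have hexp : Real.exp (-∑ p ∈ Finset.range (n + 1), x ^ (p + 1) / (p + 1))
      = (1 - x) * Real.exp (-d) := by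
    rw [hkey, Real.exp_add, Real.exp_log h1xpos]
  rw [hexp]
  have : (1 - x) * Real.exp (-d) - (1 - x) = (1 - x) * (Real.exp (-d) - 1) := by ring
  rw [this]
  have hexpd : |Real.exp (-d) - 1| ≤ 2 * |d| := by
    have := Real.abs_exp_sub_one_le (x := -d) (by rwa [abs_neg])
    rwa [abs_neg] at this
  have h1xabs : |1 - x| ≤ 3/2 := by
    rw [abs_le]; constructor <;> [nlinarith [abs_le.mp hx]; nlinarith [abs_le.mp hx]]
  rw [Real.norm_eq_abs, abs_mul]
  have hxh : |x| ^ (n+2) = |h|^(n+2) * |lam|^(n+2) := by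
    rw [hxdef, abs_mul, mul_pow]
  have hlampow : |lam| ^ (n+2) ≤ (|lam| + 1)^(n+2) := pow_le_pow_left₀ hlam (by linarith) _
  have hnorm : ‖h ^ (n+2)‖ = |h| ^ (n+2) := by rw [norm_pow, Real.norm_eq_abs]
  rw [hnorm]
  calc |1 - x| * |Real.exp (-d) - 1| ≤ (3/2) * (2 * |d|) := by
        apply mul_le_mul h1xabs hexpd (abs_nonneg _) (by norm_num)
    _ ≤ (3/2) * (2 * (2 * |x| ^ (n+2))) := by nlinarith
    _ = 6 * |x| ^ (n+2) := by ring
    _ = 6 * (|h|^(n+2) * |lam|^(n+2)) := by rw [hxh]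
    _ ≤ 6 * (|h|^(n+2) * (|lam|+1)^(n+2)) := by
        have : (0:ℝ) ≤ |h|^(n+2) := by positivity
        nlinarith
    _ = 6 * (|lam| + 1) ^ (n + 2) * |h| ^ (n + 2) := by ring


/-- For a real symmetric `A` and `n : ℕ`, with
`M(h) = -∑_{p=0}^{n} (h^p/(p+1)) A^{p+1}` the order-`n` truncated BEA (principal) flow
field for the quadratic loss `E(θ) = ½θᵀAθ`, the time-`h` solution of the truncated
flow matches one gradient descent step up to `O(h^{n+2})` in matrix norm:
`exp(h·M(h)) - (I - hA) = O(h^{n+2})` as `h → 0`. -/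
theorem truncated_bea_flow_order (D : ℕ) (A : Matrix (Fin D) (Fin D) ℝ)
    (hA : A.IsSymm) (n : ℕ)
    (M : ℝ → Matrix (Fin D) (Fin D) ℝ)
    (hM : M = fun h => -∑ p ∈ Finset.range (n + 1), (h ^ p / (p + 1 : ℝ)) • A ^ (p + 1)) :
    (fun h : ℝ => NormedSpace.exp (h • M h) - (1 - h • A))
      =O[nhds 0] (fun h : ℝ => h ^ (n + 2)) := by
  have hH : A.IsHermitian := by
    rw [Matrix.IsHermitian, Matrix.conjTranspose_eq_transpose_of_trivial]; exact hA
  set lam : Fin D → ℝ := hH.eigenvalues with hlam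
  set U : Matrix (Fin D) (Fin D) ℝ := (hH.eigenvectorUnitary : Matrix (Fin D) (Fin D) ℝ) with hUdef
  set V : Matrix (Fin D) (Fin D) ℝ := star U with hVdef
  have hU1 : U * V = 1 := (Matrix.mem_unitaryGroup_iff).mp hH.eigenvectorUnitary.2
  have hU2 : V * U = 1 := (Matrix.mem_unitaryGroup_iff').mp hH.eigenvectorUnitary.2
  set u : (Matrix (Fin D) (Fin D) ℝ)ˣ := ⟨U, V, hU1, hU2⟩ with hudef
  have huinv : (↑u⁻¹ : Matrix (Fin D) (Fin D) ℝ) = V := rfl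
  have huval : (↑u : Matrix (Fin D) (Fin D) ℝ) = U := rfl
  have hAeq : A = U * diagonal lam * V := by
    have := hH.spectral_theorem
    simpa using this
  -- conjugation lemmas
  have step : ∀ (c : ℝ) (v : Fin D → ℝ),
      c • (U * diagonal v * V) = U * diagonal (fun i => c * v i) * V := by
    intro c v
    rw [show (diagonal fun i => c * v i) = c • diagonal v by
          rw [← Matrix.diagonal_smul]; congr 1]
    rw [mul_smul_comm, smul_mul_assoc]
  have hApow : ∀ k : ℕ, A ^ k = U * diagonal (fun i => lam i ^ k) * V := by
    intro k
    rw [hAeq, ← huval, ← huinv, Units.conj_pow, Matrix.diagonal_pow]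
    rfl
  -- the diagonal form of h • M h
  have hq : ∀ h : ℝ,
      h • M h = U * diagonal
        (fun i => -∑ p ∈ Finset.range (n + 1), (h * lam i) ^ (p + 1) / (p + 1)) * V := by
    intro h
    rw [hM]
    simp only [smul_neg, Finset.smul_sum, smul_smul, hApow, step]
    rw [show ∀ f : ℕ → Fin D → ℝ,
        ∑ p ∈ Finset.range (n + 1), U * diagonal (f p) * V
          = U * diagonal (fun i => ∑ p ∈ Finset.range (n + 1), f p i) * V from ?_]
    · rw [show ∀ X : Matrix (Fin D) (Fin D) ℝ, -(U * X * V) = U * (-X) * V by intro X; simp]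
      rw [Matrix.diagonal_neg]
      congr 2
      refine congrArg diagonal (funext fun i => ?_)
      rw [neg_inj]
      refine Finset.sum_congr rfl fun p _ => ?_
      rw [mul_pow]
      ring
    · intro f
      rw [← Finset.sum_mul, ← Finset.mul_sum]
      congr 2
      have := map_sum (Matrix.diagonalAddMonoidHom (Fin D) ℝ) f (Finset.range (n + 1))
      simp only [Matrix.diagonalAddMonoidHom_apply] at this
      rw [← this]
      congr 1
      exact funext fun i => (Finset.sum_apply i _ _)
  set e : ℝ → Fin D → ℝ := fun h i =>
    Real.exp (-∑ p ∈ Finset.range (n + 1), (h * lam i) ^ (p + 1) / (p + 1)) - (1 - h * lam i)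
    with hedef
  have hone : (1 : Matrix (Fin D) (Fin D) ℝ) = U * diagonal (fun _ => (1 : ℝ)) * V := by
    rw [Matrix.diagonal_one, mul_one, hU1]
  have hfinal : ∀ h : ℝ,
      NormedSpace.exp (h • M h) - (1 - h • A) = U * diagonal (e h) * V := by
    intro h
    have h2 : (1 : Matrix (Fin D) (Fin D) ℝ) - h • A
        = U * diagonal (fun i => 1 - h * lam i) * V := by
      nth_rewrite 1 [hone]
      rw [hAeq, step, ← sub_mul, ← mul_sub, ← Matrix.diagonal_sub]
    have h1 : NormedSpace.exp (h • M h)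
        = U * diagonal (fun i =>
            Real.exp (-∑ p ∈ Finset.range (n + 1), (h * lam i) ^ (p + 1) / (p + 1))) * V := by
      rw [hq h, ← huval, ← huinv, Matrix.exp_units_conj, Matrix.exp_diagonal, huval, huinv,
        Pi.exp_def]
      simp only [← Real.exp_eq_exp_ℝ]
    rw [h1, h2, ← sub_mul, ← mul_sub]
    congr 2
    ext i j
    by_cases hij : i = j <;>
      simp [hedef, Matrix.sub_apply, Matrix.diagonal_apply, hij]
  have hpi : (fun h : ℝ => e h) =O[nhds 0] (fun h : ℝ => h ^ (n + 2)) :=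
    Asymptotics.isBigO_pi.mpr fun i => scalar_bea (lam i) n
  have hdiag : (fun h : ℝ => (diagonal (e h) : Matrix (Fin D) (Fin D) ℝ))
      =O[nhds 0] (fun h : ℝ => h ^ (n + 2)) :=
    (Asymptotics.isBigO_of_le _ fun h =>
      le_of_eq (Matrix.linfty_opNorm_diagonal (e h))).trans hpi
  have cU : (fun _ : ℝ => U) =O[nhds 0] (fun _ : ℝ => (1 : ℝ)) :=
    Asymptotics.isBigO_const_const _ one_ne_zero _
  have cV : (fun _ : ℝ => V) =O[nhds 0] (fun _ : ℝ => (1 : ℝ)) :=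
    Asymptotics.isBigO_const_const _ one_ne_zero _
  have final := (cU.mul hdiag).mul cV
  rw [show (fun h : ℝ => NormedSpace.exp (h • M h) - (1 - h • A))
      = fun h : ℝ => U * diagonal (e h) * V from funext hfinal]
  simpa using final
end

section
/- Let A be a real symmetric positive semidefinite D×D matrix, let h ≥ 0, n a natural number, and g ∈ ℝ^D. Then ⟨g, ∑_{p=0}^{n} (h^p/(p+1)) A^p g⟩ ≥ 0; equivalently, writing λ_i, u_i for the eigenvalues and orthonormal eigenvectors of A, ∑_{p=0}^{n} (h^p/(p+1)) ∑_{i=1}^D λ_i^p ⟨g,u_i⟩² ≥ 0. Consequently, along any order-n truncated backward-error-analysis flow θ̇ = -∑_{p=0}^{n} (h^p/(p+1)) A^p ∇E(θ) for a quadratic loss E with positive semidefinite Hessian A, the instantaneous change dE/dt = -⟨∇E, ∑_p (h^p/(p+1)) A^p ∇E⟩ is never positive, so such truncated flows can never capture the loss increases exhibited by gradient descent. -/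
open Matrix

/-- For a real symmetric positive semidefinite `A` with eigen-data
`(λ_i, u_i)` (orthonormal), `h ≥ 0`, `n : ℕ` and `g ∈ ℝ^D`:
`⟨g, ∑_{p=0}^{n} (h^p/(p+1)) A^p g⟩ ≥ 0`, equivalently
`∑_{p=0}^{n} (h^p/(p+1)) ∑_i λ_i^p ⟨g,u_i⟩² ≥ 0`; hence along any order-`n`
truncated BEA flow for a quadratic loss with PSD Hessian, `dE/dt ≤ 0`, so such
truncated flows never capture the loss increases exhibited by gradient descent. -/
theorem truncated_bea_flow_never_increases_quadratic_loss (D : ℕ)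
    (A : Matrix (Fin D) (Fin D) ℝ) (hA : A.PosSemidef)
    (lam : Fin D → ℝ) (u : Fin D → (Fin D → ℝ))
    (heig : ∀ i, A.mulVec (u i) = lam i • u i)
    (horth : ∀ i j, u i ⬝ᵥ u j = if i = j then (1 : ℝ) else 0)
    (h : ℝ) (hh : 0 ≤ h) (n : ℕ) (g : Fin D → ℝ) :
    0 ≤ g ⬝ᵥ (∑ p ∈ Finset.range (n + 1), (h ^ p / (p + 1 : ℝ)) • (A ^ p).mulVec g) ∧
    0 ≤ ∑ p ∈ Finset.range (n + 1), (h ^ p / (p + 1 : ℝ)) * ∑ i, lam i ^ p * (g ⬝ᵥ u i) ^ 2 := by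
  have hlam : ∀ i, 0 ≤ lam i := by
    intro i
    have h1 : u i ⬝ᵥ A.mulVec (u i) = lam i := by
      rw [heig i, dotProduct_smul, horth i i]
      simp
    have h2 := hA.dotProduct_mulVec_nonneg (u i)
    simpa [h1] using h2
  constructor
  · have key : g ⬝ᵥ (∑ p ∈ Finset.range (n + 1), (h ^ p / (p + 1 : ℝ)) • (A ^ p).mulVec g)
        = ∑ p ∈ Finset.range (n + 1), g ⬝ᵥ ((h ^ p / (p + 1 : ℝ)) • (A ^ p).mulVec g) := by
      simp only [dotProduct, Finset.sum_apply, Finset.mul_sum]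
      exact Finset.sum_comm
    rw [key]
    apply Finset.sum_nonneg
    intro p _
    rw [dotProduct_smul]
    have hpsd := (hA.pow p).dotProduct_mulVec_nonneg g
    have hc : 0 ≤ h ^ p / (p + 1 : ℝ) := by positivity
    exact mul_nonneg hc (by simpa using hpsd)
  · apply Finset.sum_nonneg
    intro p _
    have hc : 0 ≤ h ^ p / (p + 1 : ℝ) := by positivity
    apply mul_nonneg hc
    apply Finset.sum_nonneg
    intro i _
    exact mul_nonneg (pow_nonneg (hlam i) p) (sq_nonneg _)
end
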